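/- Let L be a sectionally complemented modular lattice with least element 0, and let x, y ∈ L. Then x is subperspective to y (there exists z with x ∧ z = 0 and x ∨ z ≤ y ∨ z) if and only if there exists x' ≤ y with x perspective to x'. -/
import Mathlib

variable {L : Type*} [Lattice L] [OrderBot L]

/-- Perspectivity: `x ∼ y` iff they have a common complement-like axis `z`. -/
def Perspective (x y : L) : Prop :=
  ∃ z : L, x ⊔ z = y ⊔ z ∧ x ⊓ z = ⊥ ∧ y ⊓ z = ⊥

/-- In a sectionally complemented modular lattice, `x` is
subperspective to `y` iff `x` is perspective to some `x' ≤ y`. -/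
theorem stmt16 [IsModularLattice L]
    (hsc : ∀ a b : L, b ≤ a → ∃ c : L, b ⊓ c = ⊥ ∧ b ⊔ c = a)
    (x y : L) :
    (∃ z : L, x ⊓ z = ⊥ ∧ x ⊔ z ≤ y ⊔ z) ↔
      (∃ x' : L, x' ≤ y ∧ Perspective x x') := by
  constructor
  · rintro ⟨z, hxz, hle⟩
    obtain ⟨w, hw1, hw2⟩ := hsc z (y ⊓ z) inf_le_right
    have hwz : w ≤ z := le_sup_right.trans hw2.le
    have hyw : y ⊓ w = ⊥ := by
      have : y ⊓ w = (y ⊓ z) ⊓ w := by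
        rw [inf_assoc, inf_eq_right.2 hwz]
      rw [this, hw1]
    have hxw : x ⊓ w = ⊥ := le_bot_iff.1 (by
      calc x ⊓ w ≤ x ⊓ z := inf_le_inf_left x hwz
        _ = ⊥ := hxz)
    have hyzw : y ⊔ z = y ⊔ w := by
      rw [← hw2, ← sup_assoc, sup_inf_self]
    have hxle : x ≤ y ⊔ w := by
      rw [← hyzw]; exact le_sup_left.trans hle
    refine ⟨(x ⊔ w) ⊓ y, inf_le_right, w, ?_, hxw, ?_⟩
    · rw [inf_sup_assoc_of_le y (le_sup_right : w ≤ x ⊔ w)]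
      exact (inf_eq_left.2 (sup_le hxle le_sup_right)).symm
    · exact le_bot_iff.1 (by
        calc (x ⊔ w) ⊓ y ⊓ w ≤ y ⊓ w := inf_le_inf_right w inf_le_right
          _ = ⊥ := hyw)
  · rintro ⟨x', hx'y, z, hsup, hxz, _⟩
    exact ⟨z, hxz, by rw [hsup]; exact sup_le_sup_right hx'y z⟩
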